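/- For a multiplication operator M_v : L^p(μ) → L^q(μ) with 1 ≤ q < p < ∞ on a non-atomic measure space: if M_v is bounded and bounded below (‖M_v f‖_q ≥ δ‖f‖_p for some δ > 0 and all f ∈ L^p), then v = 0 almost everywhere; in particular no such injective closed-range multiplication operator exists unless L^p = 0. -/

import Mathlib

open MeasureTheory Filter
open scoped NNReal ENNReal

/-- A measure is non-atomic on the whole space: every set of positive measure has a
measurable subset of strictly smaller positive measure. -/
def NonAtomicMeasure {X : Type*} [MeasurableSpace X] (μ : Measure X) : Prop :=
  ∀ A : Set X, MeasurableSet A → 0 < μ A →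
    ∃ B ⊆ A, MeasurableSet B ∧ 0 < μ B ∧ μ B < μ A

section Aux

variable {X : Type*} {mX : MeasurableSpace X} {μ : Measure X}

/-- Split a positive finite-measure set into two disjoint positive pieces. -/
lemma NonAtomicMeasure.split (hna : NonAtomicMeasure μ) {S : Set X}
    (hS : MeasurableSet S) (h1 : 0 < μ S) :
    ∃ B₁ B₂ : Set X, B₁ ⊆ S ∧ B₂ ⊆ S ∧ Disjoint B₁ B₂ ∧ MeasurableSet B₁ ∧
      MeasurableSet B₂ ∧ 0 < μ B₁ ∧ 0 < μ B₂ := by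
  obtain ⟨B, hBS, hBm, hB0, hBlt⟩ := hna S hS h1
  refine ⟨B, S \ B, hBS, Set.diff_subset, Set.disjoint_sdiff_right, hBm, hS.diff hBm,
    hB0, ?_⟩
  by_contra h
  push_neg at h
  have h0 : μ (S \ B) = 0 := le_antisymm h zero_le
  have hle : μ S ≤ μ B + μ (S \ B) := by
    conv_lhs => rw [← Set.union_diff_cancel hBS]
    exact measure_union_le _ _
  rw [h0, add_zero] at hle
  exact (hle.trans_lt hBlt).false

/-- N disjoint measurable positive finite measure subsets of a positive finite set. -/
lemma NonAtomicMeasure.family (hna : NonAtomicMeasure μ) :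
    ∀ (N : ℕ) (S : Set X), MeasurableSet S → 0 < μ S → μ S < ∞ →
    ∃ B : Fin N → Set X, (∀ i, B i ⊆ S) ∧ (∀ i, MeasurableSet (B i)) ∧
      (∀ i, 0 < μ (B i)) ∧ (∀ i, μ (B i) < ∞) ∧ Pairwise (Function.onFun Disjoint B) := by
  intro N
  induction N with
  | zero =>
      intro S _ _ _
      exact ⟨fun i => i.elim0, fun i => i.elim0, fun i => i.elim0, fun i => i.elim0,
        fun i => i.elim0, fun i => i.elim0⟩
  | succ N ih =>
      intro S hS h1 h2
      obtain ⟨B₁, B₂, hB₁S, hB₂S, hdisj, hB₁m, hB₂m, hB₁0, hB₂0⟩ := hna.split hS h1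
      have hB₂fin : μ B₂ < ∞ := lt_of_le_of_lt (measure_mono hB₂S) h2
      obtain ⟨B', h'S, h'm, h'0, h'fin, h'd⟩ := ih B₂ hB₂m hB₂0 hB₂fin
      refine ⟨Fin.cons B₁ B', ?_, ?_, ?_, ?_, ?_⟩
      · intro i
        induction i using Fin.cases with
        | zero => simpa using hB₁S
        | succ i => simpa using (h'S i).trans hB₂S
      · intro i
        induction i using Fin.cases with
        | zero => simpa using hB₁m
        | succ i => simpa using h'm i
      · intro i
        induction i using Fin.cases with
        | zero => simpa using hB₁0
        | succ i => simpa using h'0 i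
      · intro i
        induction i using Fin.cases with
        | zero => simpa using lt_of_le_of_lt (measure_mono hB₁S) h2
        | succ i => simpa using h'fin i
      · intro i j hij
        induction i using Fin.cases with
        | zero =>
            induction j using Fin.cases with
            | zero => exact absurd rfl hij
            | succ j =>
                simp only [Function.onFun, Fin.cons_zero, Fin.cons_succ]
                exact hdisj.mono_right (h'S j)
        | succ i =>
            induction j using Fin.cases with
            | zero =>
                simp only [Function.onFun, Fin.cons_zero, Fin.cons_succ]
                exact (hdisj.mono_right (h'S i)).symm
            | succ j =>
                simp only [Function.onFun, Fin.cons_succ]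
                exact h'd (fun h => hij (congrArg Fin.succ h))

/-- Pointwise identity for a weighted sum of indicators over disjoint sets. -/
lemma pointwise_sum_enorm {N : ℕ} (B : Fin N → Set X)
    (hd : Pairwise (Function.onFun Disjoint B)) (a : Fin N → ℝ) (w : X → ℝ)
    {r : ℝ} (hr : 0 < r) (x : X) :
    (‖w x * ∑ i, (B i).indicator (fun _ => a i) x‖₊ : ℝ≥0∞) ^ r
      = ∑ i, (B i).indicator (fun y => (‖w y * a i‖₊ : ℝ≥0∞) ^ r) x := by
  by_cases hx : ∃ j, x ∈ B j
  · obtain ⟨j, hj⟩ := hx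
    have hne : ∀ i ∈ Finset.univ, i ≠ j → ∀ (g : X → ℝ≥0∞),
        (B i).indicator g x = 0 := fun i _ hij g =>
      Set.indicator_of_notMem (Set.disjoint_right.mp (hd hij) hj) _
    have hsum : ∑ i, (B i).indicator (fun _ => a i) x = a j := by
      rw [Finset.sum_eq_single_of_mem j (Finset.mem_univ j) (fun i _ hij =>
        Set.indicator_of_notMem (Set.disjoint_right.mp (hd hij) hj) _)]
      exact Set.indicator_of_mem hj _
    have hsum2 : ∑ i, (B i).indicator (fun y => (‖w y * a i‖₊ : ℝ≥0∞) ^ r) x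
        = (‖w x * a j‖₊ : ℝ≥0∞) ^ r := by
      rw [Finset.sum_eq_single_of_mem j (Finset.mem_univ j) (fun i _ hij =>
        hne i (Finset.mem_univ i) hij _)]
      exact Set.indicator_of_mem hj _
    rw [hsum, hsum2]
  · push_neg at hx
    have h1 : ∑ i, (B i).indicator (fun _ => a i) x = 0 :=
      Finset.sum_eq_zero fun i _ => Set.indicator_of_notMem (hx i) _
    have h2 : ∑ i, (B i).indicator (fun y => (‖w y * a i‖₊ : ℝ≥0∞) ^ r) x = 0 :=
      Finset.sum_eq_zero fun i _ => Set.indicator_of_notMem (hx i) _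
    rw [h1, h2, mul_zero]
    simp [ENNReal.zero_rpow_of_pos hr]

end Aux

/-- For `M_v : L^p → L^q` with `1 ≤ q < p < ∞` on a non-atomic measure
space: if `M_v` is bounded and bounded below, then `v = 0` a.e. -/
theorem mult_bounded_below_nonatomic
    {X : Type*} {mX : MeasurableSpace X} (μ : Measure X) [SigmaFinite μ]
    (hna : NonAtomicMeasure μ)
    (p q : ℝ) (hq : 1 ≤ q) (hqp : q < p)
    (v : X → ℝ) (hv : Measurable v)
    (C : ℝ≥0)
    (hbdd : ∀ f : X → ℝ, MemLp f (ENNReal.ofReal p) μ →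
      eLpNorm (fun x => v x * f x) (ENNReal.ofReal q) μ ≤
        C * eLpNorm f (ENNReal.ofReal p) μ)
    (δ : ℝ) (hδ : 0 < δ)
    (hbelow : ∀ f : X → ℝ, MemLp f (ENNReal.ofReal p) μ →
      ENNReal.ofReal δ * eLpNorm f (ENNReal.ofReal p) μ ≤
        eLpNorm (fun x => v x * f x) (ENNReal.ofReal q) μ) :
    v =ᵐ[μ] 0 := by
  have hq0 : (0:ℝ) < q := lt_of_lt_of_le one_pos hq
  have hp0 : (0:ℝ) < p := lt_trans hq0 hqp
  have hP0 : ENNReal.ofReal p ≠ 0 := by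
    simp only [ne_eq, ENNReal.ofReal_eq_zero, not_le]; exact hp0
  have hPtop : ENNReal.ofReal p ≠ ∞ := ENNReal.ofReal_ne_top
  have hQ0 : ENNReal.ofReal q ≠ 0 := by
    simp only [ne_eq, ENNReal.ofReal_eq_zero, not_le]; exact hq0
  have hQtop : ENNReal.ofReal q ≠ ∞ := ENNReal.ofReal_ne_top
  have hPr : (ENNReal.ofReal p).toReal = p := ENNReal.toReal_ofReal hp0.le
  have hQr : (ENNReal.ofReal q).toReal = q := ENNReal.toReal_ofReal hq0.le
  by_contra hcon
  -- there is a set of positive measure (else we are done)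
  have hA0 : μ {x | v x ≠ 0} ≠ 0 := by
    intro h
    apply hcon
    have : ∀ᵐ x ∂μ, v x = 0 := by
      rw [ae_iff]; simpa using h
    filter_upwards [this] with x hx using hx
  have hAm : MeasurableSet {x | v x ≠ 0} := (hv (measurableSet_singleton 0)).compl
  obtain ⟨S, hSm, hSsub, hS0, hSfin⟩ :=
    MeasureTheory.Measure.exists_subset_measure_lt_top hAm (pos_iff_ne_zero.mpr hA0)
  -- the key inequality, for every N
  have key : ∀ N : ℕ, ENNReal.ofReal δ * (N : ℝ≥0∞) ^ (1/q) ≤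
      (C : ℝ≥0∞) * (N : ℝ≥0∞) ^ (1/p) := by
    intro N
    obtain ⟨B, hBS, hBm, hB0, hBfin, hBd⟩ := hna.family N S hSm hS0 hSfin
    have hm0 : ∀ i, μ (B i) ≠ 0 := fun i => (hB0 i).ne'
    have hmtop : ∀ i, μ (B i) ≠ ∞ := fun i => (hBfin i).ne
    have hmtR : ∀ i, 0 < (μ (B i)).toReal := fun i => ENNReal.toReal_pos (hm0 i) (hmtop i)
    set a : Fin N → ℝ := fun i => ((μ (B i)).toReal) ^ (-(1/p)) with ha
    have hea : ∀ i, (‖a i‖₊ : ℝ≥0∞) = (μ (B i)) ^ (-(1/p)) := by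
      intro i
      rw [← enorm_eq_nnnorm, ← ofReal_norm, Real.norm_of_nonneg (Real.rpow_nonneg (hmtR i).le _),
        ← ENNReal.ofReal_rpow_of_pos (hmtR i), ENNReal.ofReal_toReal (hmtop i)]
    set f : X → ℝ := fun x => ∑ i, (B i).indicator (fun _ => a i) x with hf
    have hmem : MemLp f (ENNReal.ofReal p) μ :=
      memLp_finset_sum Finset.univ (fun i _ =>
        memLp_indicator_const _ (hBm i) (a i) (Or.inr (hmtop i)))
    -- the L^p norm of f
    have hSnorm : eLpNorm f (ENNReal.ofReal p) μ = (N : ℝ≥0∞) ^ (1/p) := by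
      rw [eLpNorm_eq_lintegral_rpow_enorm_toReal hP0 hPtop, hPr]
      simp only [enorm_eq_nnnorm]
      have hpt : ∀ x, (‖f x‖₊ : ℝ≥0∞) ^ p
          = ∑ i, (B i).indicator (fun _ => (‖a i‖₊ : ℝ≥0∞) ^ p) x := by
        intro x
        have h := pointwise_sum_enorm B hBd a (fun _ => (1:ℝ)) hp0 x
        simpa using h
      rw [lintegral_congr hpt, lintegral_finset_sum _ (fun i _ =>
        measurable_const.indicator (hBm i))]
      have hterm : ∀ i : Fin N,
          ∫⁻ x, (B i).indicator (fun _ => (‖a i‖₊ : ℝ≥0∞) ^ p) x ∂μ = 1 := by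
        intro i
        rw [lintegral_indicator_const (hBm i), hea i, ← ENNReal.rpow_mul]
        have : -(1/p) * p = -1 := by field_simp
        rw [this, ENNReal.rpow_neg_one, ENNReal.inv_mul_cancel (hm0 i) (hmtop i)]
      simp only [hterm, Finset.sum_const, Finset.card_univ, Fintype.card_fin, nsmul_eq_mul,
        mul_one]
    -- lower bound for each piece from hbelow
    have hci : ∀ i : Fin N, (ENNReal.ofReal δ) ^ q * (μ (B i)) ^ ((1/p) * q) ≤
        ∫⁻ x in B i, (‖v x‖₊ : ℝ≥0∞) ^ q ∂μ := by
      intro i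
      have hgmem : MemLp ((B i).indicator (fun _ => (1:ℝ))) (ENNReal.ofReal p) μ :=
        memLp_indicator_const _ (hBm i) 1 (Or.inr (hmtop i))
      have h := hbelow _ hgmem
      have hgnorm : eLpNorm ((B i).indicator (fun _ => (1:ℝ))) (ENNReal.ofReal p) μ
          = μ (B i) ^ (1/p) := by
        rw [eLpNorm_indicator_const (hBm i) hP0 hPtop, hPr]
        simp
      have hvg : (fun x => v x * (B i).indicator (fun _ => (1:ℝ)) x)
          = (B i).indicator v := by
        funext x
        by_cases hx : x ∈ B i
        · simp [Set.indicator_of_mem hx]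
        · simp [Set.indicator_of_notMem hx]
      have hvgnorm : eLpNorm (fun x => v x * (B i).indicator (fun _ => (1:ℝ)) x)
          (ENNReal.ofReal q) μ = (∫⁻ x in B i, (‖v x‖₊ : ℝ≥0∞) ^ q ∂μ) ^ (1/q) := by
        rw [hvg, eLpNorm_indicator_eq_eLpNorm_restrict (hBm i),
          eLpNorm_eq_lintegral_rpow_enorm_toReal hQ0 hQtop, hQr]
        rfl
      rw [hgnorm, hvgnorm] at h
      have h2 := ENNReal.rpow_le_rpow h hq0.le
      rw [ENNReal.mul_rpow_of_nonneg _ _ hq0.le, ← ENNReal.rpow_mul,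
        ← ENNReal.rpow_mul, one_div_mul_cancel hq0.ne', ENNReal.rpow_one] at h2
      exact h2
    -- L^q norm of v * f
    have hTnorm : eLpNorm (fun x => v x * f x) (ENNReal.ofReal q) μ
        = (∑ i, (‖a i‖₊ : ℝ≥0∞) ^ q * ∫⁻ x in B i, (‖v x‖₊ : ℝ≥0∞) ^ q ∂μ) ^ (1/q) := by
      rw [eLpNorm_eq_lintegral_rpow_enorm_toReal hQ0 hQtop, hQr]
      simp only [enorm_eq_nnnorm]
      congr 1
      rw [lintegral_congr (fun x => pointwise_sum_enorm B hBd a v hq0 x),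
        lintegral_finset_sum _ (fun i _ =>
          (show Measurable (fun y => (‖v y * a i‖₊ : ℝ≥0∞) ^ q) from
            ((hv.mul_const (a i)).enorm).pow measurable_const).indicator (hBm i))]
      refine Finset.sum_congr rfl fun i _ => ?_
      rw [lintegral_indicator (hBm i)]
      have hptw : ∀ x, (‖v x * a i‖₊ : ℝ≥0∞) ^ q
          = (‖v x‖₊ : ℝ≥0∞) ^ q * (‖a i‖₊ : ℝ≥0∞) ^ q := by
        intro x
        rw [nnnorm_mul, ENNReal.coe_mul, ENNReal.mul_rpow_of_nonneg _ _ hq0.le]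
      rw [lintegral_congr hptw, lintegral_mul_const _
        (show Measurable (fun x => (‖v x‖₊ : ℝ≥0∞) ^ q) from hv.enorm.pow measurable_const),
        mul_comm]
    -- lower bound for the total integral
    have hterm2 : ∀ i : Fin N, (ENNReal.ofReal δ) ^ q ≤
        (‖a i‖₊ : ℝ≥0∞) ^ q * ∫⁻ x in B i, (‖v x‖₊ : ℝ≥0∞) ^ q ∂μ := by
      intro i
      calc (ENNReal.ofReal δ) ^ q
          = (μ (B i) ^ (-(1/p))) ^ q *
              ((ENNReal.ofReal δ) ^ q * μ (B i) ^ ((1/p) * q)) := by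
            rw [← ENNReal.rpow_mul, mul_comm ((ENNReal.ofReal δ) ^ q), ← mul_assoc,
              ← ENNReal.rpow_add _ _ (hm0 i) (hmtop i)]
            have : -(1/p) * q + 1/p * q = 0 := by ring
            rw [this, ENNReal.rpow_zero, one_mul]
        _ ≤ (μ (B i) ^ (-(1/p))) ^ q * ∫⁻ x in B i, (‖v x‖₊ : ℝ≥0∞) ^ q ∂μ :=
            mul_le_mul_right (hci i) _
        _ = (‖a i‖₊ : ℝ≥0∞) ^ q * ∫⁻ x in B i, (‖v x‖₊ : ℝ≥0∞) ^ q ∂μ := by rw [hea i]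
    have hTlow : (N : ℝ≥0∞) * (ENNReal.ofReal δ) ^ q ≤
        ∑ i, (‖a i‖₊ : ℝ≥0∞) ^ q * ∫⁻ x in B i, (‖v x‖₊ : ℝ≥0∞) ^ q ∂μ := by
      calc (N : ℝ≥0∞) * (ENNReal.ofReal δ) ^ q
          = ∑ _i : Fin N, (ENNReal.ofReal δ) ^ q := by
            simp [Finset.sum_const, nsmul_eq_mul]
        _ ≤ _ := Finset.sum_le_sum fun i _ => hterm2 i
    -- combine
    have h1 : ENNReal.ofReal δ * (N : ℝ≥0∞) ^ (1/q) ≤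
        eLpNorm (fun x => v x * f x) (ENNReal.ofReal q) μ := by
      rw [hTnorm]
      calc ENNReal.ofReal δ * (N : ℝ≥0∞) ^ (1/q)
          = ((N : ℝ≥0∞) * (ENNReal.ofReal δ) ^ q) ^ (1/q) := by
            rw [ENNReal.mul_rpow_of_nonneg _ _ (by positivity), ← ENNReal.rpow_mul,
              mul_one_div, div_self hq0.ne', ENNReal.rpow_one, mul_comm]
        _ ≤ _ := ENNReal.rpow_le_rpow hTlow (by positivity)
    have h2 := hbdd f hmem
    rw [hSnorm] at h2
    exact h1.trans h2
  -- convert to a real inequality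
  have keyR : ∀ N : ℕ, δ * (N : ℝ) ^ (1/q) ≤ (C : ℝ) * (N : ℝ) ^ (1/p) := by
    intro N
    have h := key N
    have hfin2 : (C : ℝ≥0∞) * (N : ℝ≥0∞) ^ (1/p) ≠ ∞ :=
      ENNReal.mul_ne_top ENNReal.coe_ne_top
        (ENNReal.rpow_ne_top_of_nonneg (by positivity) (ENNReal.natCast_ne_top N))
    have h3 := ENNReal.toReal_mono hfin2 h
    rw [ENNReal.toReal_mul, ENNReal.toReal_mul, ENNReal.toReal_ofReal hδ.le,
      ← ENNReal.toReal_rpow, ← ENNReal.toReal_rpow, ENNReal.toReal_natCast,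
      ENNReal.coe_toReal] at h3
    exact h3
  -- choose N large and derive a contradiction
  have he : (0:ℝ) < 1/q - 1/p := by
    have : 1/p < 1/q := one_div_lt_one_div_of_lt hq0 hqp
    linarith
  obtain ⟨N, hN⟩ := exists_nat_gt (((C : ℝ)/δ) ^ (1/q - 1/p)⁻¹)
  have hNpos : (0:ℝ) < (N : ℝ) :=
    lt_of_le_of_lt (Real.rpow_nonneg (by positivity) _) hN
  have hgt : (C : ℝ)/δ < (N : ℝ) ^ (1/q - 1/p) := by
    have h := Real.rpow_lt_rpow (Real.rpow_nonneg (by positivity) _) hN he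
    rwa [← Real.rpow_mul (by positivity), inv_mul_cancel₀ he.ne', Real.rpow_one] at h
  have hsplit : (N : ℝ) ^ (1/q) = (N : ℝ) ^ (1/p) * (N : ℝ) ^ (1/q - 1/p) := by
    rw [← Real.rpow_add hNpos]; ring_nf
  have h := keyR N
  rw [hsplit, show δ * ((N:ℝ) ^ (1/p) * (N:ℝ) ^ (1/q - 1/p))
      = (δ * (N:ℝ) ^ (1/q - 1/p)) * (N:ℝ) ^ (1/p) from by ring] at h
  have hppow : (0:ℝ) < (N : ℝ) ^ (1/p) := Real.rpow_pos_of_pos hNpos _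
  have h4 : δ * (N : ℝ) ^ (1/q - 1/p) ≤ (C : ℝ) := le_of_mul_le_mul_right h hppow
  have h5 : (C : ℝ) < δ * (N : ℝ) ^ (1/q - 1/p) := by
    have := (div_lt_iff₀ hδ).mp hgt
    linarith
  linarith
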